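/- (Komlós' lemma) Let (f_n)_{n≥1} be a sequence of nonnegative random variables on (Ω, 𝓕, P) that is bounded in L^1(P). Then there exist a sequence of convex combinations f̃_n ∈ conv(f_n, f_{n+1}, …) and a nonnegative random variable f ∈ L^1(P) such that f̃_n → f P-almost surely. -/

import Mathlib

open MeasureTheory Filter Topology Set

noncomputable section

namespace OSS

variable {Ω : Type*} {m : MeasurableSpace Ω}

/-- The time index set `[0,1]`. -/
def I : Set ℝ := Set.Icc 0 1

/-- Left limit of a path at `t`, with the convention `f (0-) = 0`. -/
noncomputable def leftLimAt (f : ℝ → ℝ) (t : ℝ) : ℝ :=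
  if t = 0 then 0 else Function.leftLim f t

/-- Right limit of a path at `t`, with the convention `f (1+) = f 1`. -/
noncomputable def rightLimAt (f : ℝ → ℝ) (t : ℝ) : ℝ :=
  if t = 1 then f 1 else Function.rightLim f t

/-- A path is làdlàg on `[0,1]`: right limits exist on `[0,1)`, left limits exist on `(0,1]`. -/
def LadlagOn (f : ℝ → ℝ) : Prop :=
  (∀ t ∈ Set.Ico (0:ℝ) 1, ∃ l, Tendsto f (𝓝[>] t) (𝓝 l)) ∧
  (∀ t ∈ Set.Ioc (0:ℝ) 1, ∃ l, Tendsto f (𝓝[<] t) (𝓝 l))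

/-- A path is càdlàg on `[0,1]`. -/
def CadlagOn (f : ℝ → ℝ) : Prop :=
  (∀ t ∈ Set.Ico (0:ℝ) 1, ContinuousWithinAt f (Set.Ici t) t) ∧
  (∀ t ∈ Set.Ioc (0:ℝ) 1, ∃ l, Tendsto f (𝓝[<] t) (𝓝 l))

/-- A path is càdlàg on all of `ℝ` (used to generate the optional σ-algebra). -/
def Cadlag (f : ℝ → ℝ) : Prop :=
  (∀ t : ℝ, ContinuousWithinAt f (Set.Ici t) t) ∧ (∀ t : ℝ, ∃ l, Tendsto f (𝓝[<] t) (𝓝 l))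

/-- A path is left-continuous on all of `ℝ` (used to generate the predictable σ-algebra). -/
def Caglad (f : ℝ → ℝ) : Prop := ∀ t : ℝ, ContinuousWithinAt f (Set.Iic t) t

/-- Usual conditions: the filtration is right-continuous and complete. -/
def UsualConditions (𝓕 : Filtration ℝ m) (μ : Measure Ω) : Prop :=
  (∀ t : ℝ, (𝓕 t : MeasurableSpace Ω) = ⨅ (s : ℝ) (_ : t < s), 𝓕 s) ∧
  (∀ s : Set Ω, μ s = 0 → MeasurableSet[𝓕 0] s)

/-- A `[0,1]`-valued stopping time. -/
def IsStoppingTime01 (𝓕 : Filtration ℝ m) (τ : Ω → ℝ) : Prop :=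
  IsStoppingTime 𝓕 (fun ω => (τ ω : WithTop ℝ)) ∧ ∀ ω, τ ω ∈ I

/-- A `[0,1] ∪ {∞}`-valued stopping time, where the value `∞` is encoded by the
real number `2` (any event happening on `[0,1]` occurs strictly before `2`). -/
def IsStoppingTimeExt (𝓕 : Filtration ℝ m) (τ : Ω → ℝ) : Prop :=
  IsStoppingTime 𝓕 (fun ω => (τ ω : WithTop ℝ)) ∧ ∀ ω, τ ω ∈ I ∪ {2}

/-- Martingale property on the time interval `[0,1]`. -/
def MartingaleOn (𝓕 : Filtration ℝ m) (μ : Measure Ω) (M : ℝ → Ω → ℝ) : Prop :=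
  (∀ t ∈ I, StronglyMeasurable[𝓕 t] (M t)) ∧ (∀ t ∈ I, Integrable (M t) μ) ∧
  ∀ s ∈ I, ∀ t ∈ I, s ≤ t → μ[M t | 𝓕 s] =ᵐ[μ] M s

/-- Supermartingale property on the time interval `[0,1]`. -/
def SupermartingaleOn (𝓕 : Filtration ℝ m) (μ : Measure Ω) (X : ℝ → Ω → ℝ) : Prop :=
  (∀ t ∈ I, StronglyMeasurable[𝓕 t] (X t)) ∧ (∀ t ∈ I, Integrable (X t) μ) ∧
  ∀ s ∈ I, ∀ t ∈ I, s ≤ t → μ[X t | 𝓕 s] ≤ᵐ[μ] X s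

/-- Nonnegativity of a process on `[0,1]`. -/
def NonnegOn (X : ℝ → Ω → ℝ) : Prop := ∀ t ∈ I, ∀ ω : Ω, 0 ≤ X t ω

/-- The optional σ-algebra on `ℝ × Ω`: generated by all adapted càdlàg processes. -/
noncomputable def optionalSigma (𝓕 : Filtration ℝ m) : MeasurableSpace (ℝ × Ω) :=
  ⨆ Y : {Y : ℝ → Ω → ℝ // (∀ t, StronglyMeasurable[𝓕 t] (Y t)) ∧ ∀ ω, Cadlag fun t => Y t ω},
    MeasurableSpace.comap (fun p : ℝ × Ω => Y.1 p.1 p.2) inferInstance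

/-- A process is optional (on `[0,1]`) if it agrees on `[0,1]` with a process that is
measurable with respect to the optional σ-algebra. -/
def IsOptional (𝓕 : Filtration ℝ m) (X : ℝ → Ω → ℝ) : Prop :=
  ∃ Y : ℝ → Ω → ℝ, Measurable[optionalSigma 𝓕] (fun p : ℝ × Ω => Y p.1 p.2) ∧
    ∀ t ∈ I, ∀ ω : Ω, X t ω = Y t ω

/-- The predictable σ-algebra on `ℝ × Ω`: generated by all adapted left-continuous processes. -/
noncomputable def predictableSigma (𝓕 : Filtration ℝ m) : MeasurableSpace (ℝ × Ω) :=
  ⨆ Y : {Y : ℝ → Ω → ℝ // (∀ t, StronglyMeasurable[𝓕 t] (Y t)) ∧ ∀ ω, Caglad fun t => Y t ω},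
    MeasurableSpace.comap (fun p : ℝ × Ω => Y.1 p.1 p.2) inferInstance

/-- A process is predictable (on `[0,1]`) if it agrees on `[0,1]` with a process that is
measurable with respect to the predictable σ-algebra. -/
def IsPredictable (𝓕 : Filtration ℝ m) (X : ℝ → Ω → ℝ) : Prop :=
  ∃ Y : ℝ → Ω → ℝ, Measurable[predictableSigma 𝓕] (fun p : ℝ × Ω => Y p.1 p.2) ∧
    ∀ t ∈ I, ∀ ω : Ω, X t ω = Y t ω

/-- Optional strong supermartingale: optional, làdlàg, integrable at every `[0,1]`-valued
stopping time, and satisfying the supermartingale inequality at all pairs of stopping times. -/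
def IsOptionalStrongSupermartingale (𝓕 : Filtration ℝ m) (μ : Measure Ω) (X : ℝ → Ω → ℝ) :
    Prop :=
  IsOptional 𝓕 X ∧ (∀ ω, LadlagOn fun t => X t ω) ∧
  (∀ τ : Ω → ℝ, IsStoppingTime01 𝓕 τ → Integrable (fun ω => X (τ ω) ω) μ) ∧
  ∀ σ τ : Ω → ℝ, ∀ hσ : IsStoppingTime01 𝓕 σ, IsStoppingTime01 𝓕 τ → (∀ ω, σ ω ≤ τ ω) →
    μ[fun ω => X (τ ω) ω | hσ.1.measurableSpace] ≤ᵐ[μ] fun ω => X (σ ω) ω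

/-- A predictable stopping time: one admitting an announcing sequence. -/
def IsPredictableStoppingTime (𝓕 : Filtration ℝ m) (σ : Ω → ℝ) : Prop :=
  IsStoppingTime 𝓕 (fun ω => (σ ω : WithTop ℝ)) ∧ ∃ a : ℕ → Ω → ℝ, (∀ k, IsStoppingTime 𝓕 (fun ω => (a k ω : WithTop ℝ))) ∧
    (∀ k ω, a k ω ≤ a (k + 1) ω) ∧ (∀ ω, Tendsto (fun k => a k ω) atTop (𝓝 (σ ω))) ∧
    ∀ k ω, 0 < σ ω → a k ω < σ ω

/-- A totally inaccessible stopping time (for real-valued, hence finite, stopping times). -/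
def IsTotallyInaccessible (𝓕 : Filtration ℝ m) (μ : Measure Ω) (τ : Ω → ℝ) : Prop :=
  IsStoppingTime 𝓕 (fun ω => (τ ω : WithTop ℝ)) ∧
  ∀ σ : Ω → ℝ, IsPredictableStoppingTime 𝓕 σ → μ {ω | τ ω = σ ω} = 0

/-- The σ-algebra `𝓕_{σ-}`, generated by `𝓕 0` and the sets `A ∩ {t < σ}`, `A ∈ 𝓕 t`. -/
noncomputable def sigmaPre (𝓕 : Filtration ℝ m) (σ : Ω → ℝ) : MeasurableSpace Ω :=
  (𝓕 0 : MeasurableSpace Ω) ⊔ MeasurableSpace.generateFrom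
    {s : Set Ω | ∃ t ∈ I, ∃ A : Set Ω, MeasurableSet[𝓕 t] A ∧ s = A ∩ {ω | t < σ ω}}

/-- Predictable strong supermartingale. -/
def IsPredictableStrongSupermartingale (𝓕 : Filtration ℝ m) (μ : Measure Ω)
    (X : ℝ → Ω → ℝ) : Prop :=
  IsPredictable 𝓕 X ∧
  (∀ τ : Ω → ℝ, IsPredictableStoppingTime 𝓕 τ → (∀ ω, τ ω ∈ I) →
    Integrable (fun ω => X (τ ω) ω) μ) ∧
  ∀ σ τ : Ω → ℝ, IsPredictableStoppingTime 𝓕 σ → IsPredictableStoppingTime 𝓕 τ →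
    (∀ ω, σ ω ∈ I) → (∀ ω, τ ω ∈ I) → (∀ ω, σ ω ≤ τ ω) →
    μ[fun ω => X (τ ω) ω | sigmaPre 𝓕 σ] ≤ᵐ[μ] fun ω => X (σ ω) ω

/-- `g` is a (finite) convex combination of `f n, f (n+1), …`. -/
def ConvexCombFrom {α : Type*} [AddCommMonoid α] [Module ℝ α] (f : ℕ → α) (n : ℕ) (g : α) :
    Prop :=
  ∃ (N : ℕ) (w : ℕ → ℝ), (∀ k, 0 ≤ w k) ∧ (∀ k < n, w k = 0) ∧
    (∑ k ∈ Finset.range (N + 1), w k) = 1 ∧ g = ∑ k ∈ Finset.range (N + 1), w k • f k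

/-- Standard Brownian motion on `[0,1]` with respect to the filtration `𝓕`. -/
def IsBrownianMotion (𝓕 : Filtration ℝ m) (μ : Measure Ω) (W : ℝ → Ω → ℝ) : Prop :=
  (∀ t ∈ I, StronglyMeasurable[𝓕 t] (W t)) ∧
  (∀ ω, W 0 ω = 0) ∧
  (∀ ω, ContinuousOn (fun t => W t ω) I) ∧
  ∀ s t : ℝ, 0 ≤ s → s ≤ t → t ≤ 1 →
    ProbabilityTheory.Indep
      (MeasurableSpace.comap (fun ω => W t ω - W s ω) inferInstance) (𝓕 s) μ ∧
    Measure.map (fun ω => W t ω - W s ω) μ =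
      ProbabilityTheory.gaussianReal 0 (Real.toNNReal (t - s))

/-- Left jump `Δf_u = f u - f (u-)` (convention `f (0-) = 0`). -/
noncomputable def lJump (f : ℝ → ℝ) (u : ℝ) : ℝ := f u - leftLimAt f u

/-- Right jump `Δ₊f_u = f (u+) - f u` (convention `f (1+) = f 1`). -/
noncomputable def rJump (f : ℝ → ℝ) (u : ℝ) : ℝ := rightLimAt f u - f u

/-- `Σ_{0 < u ≤ t} Δf_u`. -/
noncomputable def sumLJumps (f : ℝ → ℝ) (t : ℝ) : ℝ :=
  ∑' u : ℝ, Set.indicator (Set.Ioc 0 t) (lJump f) u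

/-- `Σ_{0 ≤ u < t} Δ₊f_u`. -/
noncomputable def sumRJumps (f : ℝ → ℝ) (t : ℝ) : ℝ :=
  ∑' u : ℝ, Set.indicator (Set.Ico 0 t) (rJump f) u

/-- The continuous part `f^c` of a làdlàg finite-variation function `f`. -/
noncomputable def contPart (f : ℝ → ℝ) (t : ℝ) : ℝ := f t - sumLJumps f t - sumRJumps f t

/-- `v` is the Riemann–Stieltjes integral `∫_a^b f dg`. -/
def IsRSIntegral (f g : ℝ → ℝ) (a b v : ℝ) : Prop :=
  ∀ ε > (0:ℝ), ∃ δ > (0:ℝ), ∀ (n : ℕ) (t ξ : ℕ → ℝ),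
    0 < n → t 0 = a → t n = b → (∀ i < n, t i ≤ t (i + 1)) →
    (∀ i < n, t (i + 1) - t i < δ) → (∀ i < n, ξ i ∈ Set.Icc (t i) (t (i + 1))) →
    |(∑ i ∈ Finset.range n, f (ξ i) * (g (t (i + 1)) - g (t i))) - v| < ε

/-- The Riemann–Stieltjes integral `∫_a^b f dg` (junk value `0` if it does not exist). -/
noncomputable def rsIntegral (f g : ℝ → ℝ) (a b : ℝ) : ℝ :=
  letI := Classical.propDecidable (∃ v, IsRSIntegral f g a b v)
  if h : ∃ v, IsRSIntegral f g a b v then h.choose else 0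

/-- The pathwise integral `∫_0^t X_u dφ_u` of a làdlàg path against a finite-variation path. -/
noncomputable def intXdPhi (X φ : ℝ → ℝ) (t : ℝ) : ℝ :=
  rsIntegral X (contPart φ) 0 t
    + (∑' u : ℝ, Set.indicator (Set.Ioc 0 t) (fun u => leftLimAt X u * lJump φ u) u)
    + ∑' u : ℝ, Set.indicator (Set.Ico 0 t) (fun u => X u * rJump φ u) u

/-- The pathwise integral `(φ • X)_t = ∫_0^t φ_u dX_u` of a finite-variation path against a
làdlàg path. -/
noncomputable def intPhiDX (φ X : ℝ → ℝ) (t : ℝ) : ℝ :=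
  rsIntegral (contPart φ) X 0 t
    + (∑' u : ℝ, Set.indicator (Set.Ioc 0 t) (fun u => lJump φ u * (X t - leftLimAt X u)) u)
    + ∑' u : ℝ, Set.indicator (Set.Ico 0 t) (fun u => rJump φ u * (X t - X u)) u

/-- The path `f` makes at least `k` moves of size `> ε` on `[0,1]`. -/
def MovesAtLeast (ε : ℝ) (f : ℝ → ℝ) (k : ℕ) : Prop :=
  ∃ t : ℕ → ℝ, 0 ≤ t 0 ∧ t k ≤ 1 ∧ (∀ i < k, t i < t (i + 1)) ∧
    ∀ i < k, ε < |f (t (i + 1)) - f (t i)|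

/-- `M_ε(f)`: the maximal number of moves of size `> ε` of the path `f` on `[0,1]`. -/
noncomputable def moves (ε : ℝ) (f : ℝ → ℝ) : ℕ∞ :=
  ⨆ k ∈ {k : ℕ | MovesAtLeast ε f k}, (k : ℕ∞)

/-- The filter of rationals `q` with `t < q ≤ 1`, `q → t`. -/
def ratDown (t : ℝ) : Filter ℚ :=
  Filter.comap (fun q : ℚ => (q : ℝ)) ((𝓝[>] t) ⊓ Filter.principal (Set.Iic 1))

/-- The `m`-th dyadic grid on `[0,1]`. -/
def dyadics (k : ℕ) : Set ℝ := {t : ℝ | ∃ j : ℕ, j ≤ 2 ^ k ∧ t = (j : ℝ) / 2 ^ k}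

/-- The `m`-th dyadic approximation `inf{t ∈ D_m | t > τ} ∧ 1` of a stopping time `τ`. -/
noncomputable def dyadicApprox (k : ℕ) (τ : Ω → ℝ) (ω : Ω) : ℝ :=
  sInf ({t ∈ dyadics k | τ ω < t} ∪ {1})



private lemma exp_midpoint_identity (a b : ℝ) :
    Real.exp (-((a+b)/2)) + (Real.exp (-(a/2)) - Real.exp (-(b/2)))^2/2
      = (Real.exp (-a) + Real.exp (-b))/2 := by
  have ha : Real.exp (-a) = Real.exp (-(a/2)) * Real.exp (-(a/2)) := by
    rw [← Real.exp_add]; ring_nf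
  have hb : Real.exp (-b) = Real.exp (-(b/2)) * Real.exp (-(b/2)) := by
    rw [← Real.exp_add]; ring_nf
  have hab : Real.exp (-((a+b)/2)) = Real.exp (-(a/2)) * Real.exp (-(b/2)) := by
    rw [← Real.exp_add]; ring_nf
  rw [ha, hb, hab]; ring

private lemma exp_gap_aux {a b M ε : ℝ} (hab : a ≤ b) (haM : a ≤ M)
    (hε : 0 ≤ ε) (hgap : ε ≤ b - a) :
    Real.exp (-(M/2)) * (1 - Real.exp (-(ε/2))) ≤ Real.exp (-(a/2)) - Real.exp (-(b/2)) := by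
  have hb' : Real.exp (-(b/2)) = Real.exp (-(a/2)) * Real.exp (-((b-a)/2)) := by
    rw [← Real.exp_add]; ring_nf
  have e1 : Real.exp (-(M/2)) ≤ Real.exp (-(a/2)) := Real.exp_le_exp.2 (by linarith)
  have e2 : Real.exp (-((b-a)/2)) ≤ Real.exp (-(ε/2)) := Real.exp_le_exp.2 (by linarith)
  have e3 : Real.exp (-(ε/2)) ≤ 1 := Real.exp_le_one_iff.2 (by linarith)
  have p1 : (0:ℝ) < Real.exp (-(a/2)) := Real.exp_pos _
  have p2 : (0:ℝ) < Real.exp (-(M/2)) := Real.exp_pos _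
  rw [hb']
  nlinarith

private lemma exp_gap_sq {a b M ε : ℝ} (haM : a ≤ M) (hbM : b ≤ M)
    (hε : 0 ≤ ε) (hgap : ε ≤ |a - b|) :
    (Real.exp (-(M/2)) * (1 - Real.exp (-(ε/2))))^2
      ≤ (Real.exp (-(a/2)) - Real.exp (-(b/2)))^2 := by
  have hL : 0 ≤ Real.exp (-(M/2)) * (1 - Real.exp (-(ε/2))) := by
    have := Real.exp_le_one_iff.2 (show -(ε/2) ≤ 0 by linarith)
    have := (Real.exp_pos (-(M/2))).le
    nlinarith
  rcases le_total a b with h | h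
  · have hgap' : ε ≤ b - a := by rwa [abs_of_nonpos (by linarith), neg_sub] at hgap
    have := exp_gap_aux h haM hε hgap'
    nlinarith
  · have hgap' : ε ≤ a - b := by rwa [abs_of_nonneg (by linarith)] at hgap
    have := exp_gap_aux h hbM hε hgap'
    nlinarith

private lemma sum_extend {α : Type*} [AddCommMonoid α] {N M : ℕ} (h : N ≤ M) (w : ℕ → α) :
    ∑ k ∈ Finset.range (M+1), (if k ≤ N then w k else 0) = ∑ k ∈ Finset.range (N+1), w k := by
  rw [← Finset.sum_subset (Finset.range_subset_range.2 (Nat.succ_le_succ h))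
    (fun k _ hk => if_neg (fun hle => hk (Finset.mem_range.2 (Nat.lt_succ_of_le hle))))]
  exact Finset.sum_congr rfl fun k hk => if_pos (Nat.lt_succ_iff.1 (Finset.mem_range.1 hk))

private lemma cc_self {α : Type*} [AddCommMonoid α] [Module ℝ α] (f : ℕ → α) (n : ℕ) :
    ConvexCombFrom f n (f n) := by
  refine ⟨n, fun k => if k = n then 1 else 0, ?_, ?_, ?_, ?_⟩
  · intro k; by_cases h : k = n <;> simp [h]
  · intro k hk; exact if_neg (Nat.ne_of_lt hk)
  · rw [Finset.sum_ite_eq' (Finset.range (n+1)) n fun _ => (1:ℝ)]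
    simp
  · have : ∀ k, (if k = n then (1:ℝ) else 0) • f k = if k = n then f k else 0 := by
      intro k; split <;> simp
    simp only [this]
    rw [Finset.sum_ite_eq' (Finset.range (n+1)) n f]
    simp

private lemma cc_mono {α : Type*} [AddCommMonoid α] [Module ℝ α] {f : ℕ → α} {n m : ℕ}
    (h : m ≤ n) {g : α} (hg : ConvexCombFrom f n g) : ConvexCombFrom f m g := by
  obtain ⟨N, w, h1, h2, h3, h4⟩ := hg
  exact ⟨N, w, h1, fun k hk => h2 k (lt_of_lt_of_le hk h), h3, h4⟩

private lemma cc_midpoint {α : Type*} [AddCommGroup α] [Module ℝ α] {f : ℕ → α} {n : ℕ}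
    {g₁ g₂ : α} (h₁ : ConvexCombFrom f n g₁) (h₂ : ConvexCombFrom f n g₂) :
    ConvexCombFrom f n ((2⁻¹ : ℝ) • g₁ + (2⁻¹ : ℝ) • g₂) := by
  obtain ⟨N₁, w₁, ha1, ha2, ha3, ha4⟩ := h₁
  obtain ⟨N₂, w₂, hb1, hb2, hb3, hb4⟩ := h₂
  set u : ℕ → ℝ := fun k => if k ≤ N₁ then w₁ k else 0 with hu
  set v : ℕ → ℝ := fun k => if k ≤ N₂ then w₂ k else 0 with hv
  refine ⟨max N₁ N₂, fun k => 2⁻¹ * u k + 2⁻¹ * v k, ?_, ?_, ?_, ?_⟩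
  · intro k
    have : 0 ≤ u k := by simp only [hu]; split; exacts [ha1 k, le_refl 0]
    have : 0 ≤ v k := by simp only [hv]; split; exacts [hb1 k, le_refl 0]
    positivity
  · intro k hk
    have : u k = 0 := by simp only [hu]; split; exacts [ha2 k hk, rfl]
    have : v k = 0 := by simp only [hv]; split; exacts [hb2 k hk, rfl]
    simp_all
  · rw [Finset.sum_add_distrib, ← Finset.mul_sum, ← Finset.mul_sum,
      sum_extend (le_max_left N₁ N₂) w₁, sum_extend (le_max_right N₁ N₂) w₂, ha3, hb3]
    norm_num
  · have key : ∀ k, (2⁻¹ * u k + 2⁻¹ * v k) • f k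
        = (2⁻¹:ℝ) • ((if k ≤ N₁ then w₁ k • f k else 0) + (if k ≤ N₂ then w₂ k • f k else 0)) := by
      intro k
      simp only [hu, hv]
      split <;> split <;> simp [add_smul, mul_smul, smul_add]
    simp only [key]
    rw [← Finset.smul_sum, Finset.sum_add_distrib,
      sum_extend (le_max_left N₁ N₂) (fun k => w₁ k • f k),
      sum_extend (le_max_right N₁ N₂) (fun k => w₂ k • f k), ← ha4, ← hb4, smul_add]

private lemma cc_props {Ω : Type*} {m : MeasurableSpace Ω} {μ : Measure Ω} {C : ℝ}
    {F : ℕ → Ω → ℝ} (hFmeas : ∀ k, Measurable (F k)) (hFnn : ∀ k ω, 0 ≤ F k ω)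
    (hFint : ∀ k, Integrable (F k) μ) (hFC : ∀ k, ∫ ω, F k ω ∂μ ≤ C)
    {n : ℕ} {g : Ω → ℝ} (hg : ConvexCombFrom F n g) :
    Measurable g ∧ (∀ ω, 0 ≤ g ω) ∧ Integrable g μ ∧ ∫ ω, g ω ∂μ ≤ C := by
  obtain ⟨N, w, h1, _, h3, h4⟩ := hg
  have heval : ∀ ω, g ω = ∑ k ∈ Finset.range (N+1), w k * F k ω := by
    intro ω; rw [h4]; simp [Finset.sum_apply]
  have hgfun : g = fun ω => ∑ k ∈ Finset.range (N+1), w k * F k ω := funext heval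
  refine ⟨?_, ?_, ?_, ?_⟩
  · rw [hgfun]
    exact Finset.measurable_sum _ fun k _ => (hFmeas k).const_mul (w k)
  · intro ω
    rw [heval ω]
    exact Finset.sum_nonneg fun k _ => mul_nonneg (h1 k) (hFnn k ω)
  · rw [hgfun]
    exact integrable_finset_sum _ fun k _ => ((hFint k).const_mul (w k))
  · rw [hgfun, integral_finset_sum _ fun k _ => ((hFint k).const_mul (w k))]
    calc ∑ k ∈ Finset.range (N+1), ∫ ω, w k * F k ω ∂μ
        = ∑ k ∈ Finset.range (N+1), w k * ∫ ω, F k ω ∂μ :=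
          Finset.sum_congr rfl fun k _ => integral_const_mul (w k) _
      _ ≤ ∑ k ∈ Finset.range (N+1), w k * C :=
          Finset.sum_le_sum fun k _ => mul_le_mul_of_nonneg_left (hFC k) (h1 k)
      _ = C := by rw [← Finset.sum_mul, h3, one_mul]

private lemma markov_aux {Ω : Type*} {m : MeasurableSpace Ω} {μ : Measure Ω} {C M : ℝ}
    {g : Ω → ℝ} (hmeas : Measurable g) (hnn : ∀ ω, 0 ≤ g ω) (hintg : Integrable g μ)
    (hC : ∫ ω, g ω ∂μ ≤ C) (hM : 0 < M) :
    μ {ω | M ≤ g ω} ≤ ENNReal.ofReal (C / M) := by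
  have h1 : ENNReal.ofReal M * μ {ω | ENNReal.ofReal M ≤ ENNReal.ofReal (g ω)}
      ≤ ∫⁻ ω, ENNReal.ofReal (g ω) ∂μ :=
    mul_meas_ge_le_lintegral₀ (ENNReal.measurable_ofReal.comp hmeas).aemeasurable _
  have hset : {ω | ENNReal.ofReal M ≤ ENNReal.ofReal (g ω)} = {ω | M ≤ g ω} := by
    ext ω; simp [ENNReal.ofReal_le_ofReal_iff (hnn ω)]
  have h2 : ∫⁻ ω, ENNReal.ofReal (g ω) ∂μ ≤ ENNReal.ofReal C := by
    rw [← ofReal_integral_eq_lintegral_ofReal hintg (Filter.Eventually.of_forall hnn)]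
    exact ENNReal.ofReal_le_ofReal hC
  rw [hset] at h1
  rw [ENNReal.ofReal_div_of_pos hM]
  rw [ENNReal.le_div_iff_mul_le (Or.inl (ne_of_gt (ENNReal.ofReal_pos.2 hM)))
    (Or.inl ENNReal.ofReal_ne_top)]
  calc μ {ω | M ≤ g ω} * ENNReal.ofReal M = ENNReal.ofReal M * μ {ω | M ≤ g ω} := mul_comm _ _
    _ ≤ ENNReal.ofReal C := le_trans h1 h2

private lemma exp_neg_integrable {Ω : Type*} {m : MeasurableSpace Ω} {μ : Measure Ω}
    [IsProbabilityMeasure μ] {g : Ω → ℝ} (hmeas : Measurable g) (hnn : ∀ ω, 0 ≤ g ω) :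
    Integrable (fun ω => Real.exp (-(g ω))) μ := by
  refine Integrable.mono' (integrable_const 1)
    (Real.measurable_exp.comp hmeas.neg).aestronglyMeasurable
    (Filter.Eventually.of_forall fun ω => ?_)
  rw [Real.norm_eq_abs, abs_of_pos (Real.exp_pos _)]
  exact Real.exp_le_one_iff.2 (by linarith [hnn ω])

private lemma key_estimate {Ω : Type*} {m : MeasurableSpace Ω} {μ : Measure Ω}
    [IsProbabilityMeasure μ] {g₁ g₂ : Ω → ℝ}
    (hm₁ : Measurable g₁) (hm₂ : Measurable g₂)
    (hn₁ : ∀ ω, 0 ≤ g₁ ω) (hn₂ : ∀ ω, 0 ≤ g₂ ω) {ε M : ℝ} (hε : 0 ≤ ε) :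
    (Real.exp (-(M/2)) * (1 - Real.exp (-(ε/2))))^2/2 *
        (μ ({ω | ε ≤ |g₁ ω - g₂ ω|} ∩ {ω | g₁ ω ≤ M} ∩ {ω | g₂ ω ≤ M})).toReal
      + ∫ ω, Real.exp (-((g₁ ω + g₂ ω)/2)) ∂μ
      ≤ (∫ ω, Real.exp (-(g₁ ω)) ∂μ + ∫ ω, Real.exp (-(g₂ ω)) ∂μ)/2 := by
  set δ : ℝ := (Real.exp (-(M/2)) * (1 - Real.exp (-(ε/2))))^2/2 with hδ
  set A : Set Ω := {ω | ε ≤ |g₁ ω - g₂ ω|} ∩ {ω | g₁ ω ≤ M} ∩ {ω | g₂ ω ≤ M} with hA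
  have hAmeas : MeasurableSet A := by
    refine MeasurableSet.inter (MeasurableSet.inter ?_ ?_) ?_
    · exact measurableSet_le measurable_const (hm₁.sub hm₂).abs
    · exact measurableSet_le hm₁ measurable_const
    · exact measurableSet_le hm₂ measurable_const
  have hmid : Measurable fun ω => (g₁ ω + g₂ ω)/2 := (hm₁.add hm₂).div_const 2
  have hmidnn : ∀ ω, 0 ≤ (g₁ ω + g₂ ω)/2 := fun ω => by
    have := hn₁ ω; have := hn₂ ω; linarith
  have hptwise : ∀ ω, A.indicator (fun _ => δ) ω + Real.exp (-((g₁ ω + g₂ ω)/2))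
      ≤ (Real.exp (-(g₁ ω)) + Real.exp (-(g₂ ω)))/2 := by
    intro ω
    have hid := exp_midpoint_identity (g₁ ω) (g₂ ω)
    by_cases hω : ω ∈ A
    · rw [Set.indicator_of_mem hω]
      obtain ⟨⟨h1, h2⟩, h3⟩ := hω
      have := exp_gap_sq h2 h3 hε h1
      rw [hδ]; linarith
    · rw [Set.indicator_of_notMem hω]
      have : (0:ℝ) ≤ (Real.exp (-(g₁ ω/2)) - Real.exp (-(g₂ ω/2)))^2 := sq_nonneg _
      linarith
  have hint1 : Integrable (A.indicator (fun _ => δ)) μ :=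
    (integrable_const δ).indicator hAmeas
  have hint2 : Integrable (fun ω => Real.exp (-((g₁ ω + g₂ ω)/2))) μ :=
    exp_neg_integrable hmid hmidnn
  have hint3 : Integrable (fun ω => Real.exp (-(g₁ ω))) μ := exp_neg_integrable hm₁ hn₁
  have hint4 : Integrable (fun ω => Real.exp (-(g₂ ω))) μ := exp_neg_integrable hm₂ hn₂
  have h := integral_mono (hint1.add hint2) ((hint3.add hint4).div_const 2)
    (fun ω => hptwise ω)
  simp only [Pi.add_apply] at h
  rw [integral_add hint1 hint2, integral_indicator_const δ hAmeas] at h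
  rw [integral_div, integral_add hint3 hint4] at h
  calc δ * (μ A).toReal + ∫ ω, Real.exp (-((g₁ ω + g₂ ω)/2)) ∂μ
      = (μ A).toReal • δ + ∫ ω, Real.exp (-((g₁ ω + g₂ ω)/2)) ∂μ := by
        rw [smul_eq_mul, mul_comm]
    _ ≤ _ := h

/-- Komlós' lemma: For an `L¹`-bounded sequence of nonnegative random
variables `(f_n)` there are convex combinations `f̃_n ∈ conv(f_n, f_{n+1}, …)` and a
nonnegative `f ∈ L¹` with `f̃_n → f` almost surely. -/
theorem komlos_lemma
    {Ω : Type*} {m : MeasurableSpace Ω} (μ : Measure Ω) [IsProbabilityMeasure μ]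
    (f : ℕ → Ω → ℝ) (hint : ∀ n, Integrable (f n) μ) (hnonneg : ∀ n ω, 0 ≤ f n ω)
    (hbdd : ∃ C : ℝ, ∀ n, ∫ ω, f n ω ∂μ ≤ C) :
    ∃ (ft : ℕ → Ω → ℝ) (g : Ω → ℝ),
      (∀ n, ConvexCombFrom f n (ft n)) ∧ Integrable g μ ∧ (∀ ω, 0 ≤ g ω) ∧
      ∀ᵐ ω ∂μ, Tendsto (fun n => ft n ω) atTop (𝓝 (g ω)) := by
  classical
  obtain ⟨C, hC⟩ := hbdd
  -- measurable nonnegative modifications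
  set F : ℕ → Ω → ℝ := fun n ω => max ((hint n).1.mk (f n) ω) 0 with hFdef
  have hFmeas : ∀ n, Measurable (F n) :=
    fun n => ((hint n).1.stronglyMeasurable_mk.measurable).max measurable_const
  have hFeq : ∀ n, f n =ᵐ[μ] F n := by
    intro n
    filter_upwards [(hint n).1.ae_eq_mk] with ω hω
    simp only [hFdef, ← hω]
    exact (max_eq_left (hnonneg n ω)).symm
  have hFnn : ∀ n ω, 0 ≤ F n ω := fun n ω => le_max_right _ _
  have hFint : ∀ n, Integrable (F n) μ := fun n => (hint n).congr (hFeq n)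
  have hFC : ∀ n, ∫ ω, F n ω ∂μ ≤ C := by
    intro n; rw [← integral_congr_ae (hFeq n)]; exact hC n
  have hC0 : 0 ≤ C := le_trans (integral_nonneg fun ω => hnonneg 0 ω) (hC 0)
  -- the functional Ψ and the values β
  set Ψ : (Ω → ℝ) → ℝ := fun g => ∫ ω, Real.exp (-(g ω)) ∂μ with hΨdef
  set S : ℕ → Set ℝ := fun n => {x | ∃ g, ConvexCombFrom F n g ∧ Ψ g = x} with hSdef
  have hSne : ∀ n, (S n).Nonempty := fun n => ⟨Ψ (F n), F n, cc_self F n, rfl⟩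
  have hSbdd : ∀ n, BddBelow (S n) := by
    intro n; refine ⟨0, ?_⟩; rintro x ⟨g, hg, rfl⟩
    exact integral_nonneg fun ω => (Real.exp_pos _).le
  set β : ℕ → ℝ := fun n => sInf (S n) with hβdef
  have hΨle1 : ∀ g : Ω → ℝ, Measurable g → (∀ ω, 0 ≤ g ω) → Ψ g ≤ 1 := by
    intro g hm hn
    have h := integral_mono (μ := μ) (exp_neg_integrable hm hn) (integrable_const (1:ℝ))
      (fun ω => Real.exp_le_one_iff.2 (by linarith [hn ω] : -(g ω) ≤ 0))
    rw [hΨdef]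
    simpa using h
  have hβmono : Monotone β := by
    intro a b hab
    refine csInf_le_csInf (hSbdd a) (hSne b) ?_
    rintro x ⟨g, hg, rfl⟩; exact ⟨g, cc_mono hab hg, rfl⟩
  have hβle1 : ∀ n, β n ≤ 1 := fun n =>
    le_trans (csInf_le (hSbdd n) ⟨F n, cc_self F n, rfl⟩) (hΨle1 _ (hFmeas n) (hFnn n))
  set B : ℝ := ⨆ n, β n with hBdef
  have hβbdd : BddAbove (Set.range β) := ⟨1, by rintro x ⟨n, rfl⟩; exact hβle1 n⟩
  have hβB : ∀ n, β n ≤ B := fun n => le_ciSup hβbdd n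
  have hBlt : ∀ ε : ℝ, 0 < ε → ∃ N, B - ε < β N := by
    intro ε hε
    exact exists_lt_of_lt_ciSup (show B - ε < ⨆ n, β n from by rw [← hBdef]; linarith)
  have hβle : ∀ (n : ℕ) (g' : Ω → ℝ), ConvexCombFrom F n g' → β n ≤ Ψ g' :=
    fun n g' h => csInf_le (hSbdd n) ⟨g', h, rfl⟩
  -- near-optimal selections
  have hsel : ∀ n : ℕ, ∃ gg : Ω → ℝ, ConvexCombFrom F n gg ∧ Ψ gg < β n + 1/((n:ℝ)+1) := by
    intro n
    obtain ⟨x, ⟨gg, hgg, rfl⟩, hx⟩ := exists_lt_of_csInf_lt (hSne n)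
      (show sInf (S n) < β n + 1/((n:ℝ)+1) from lt_add_of_pos_right _ (by positivity))
    exact ⟨gg, hgg, hx⟩
  choose g hg1 hg2 using hsel
  have hgprops : ∀ n, Measurable (g n) ∧ (∀ ω, 0 ≤ g n ω) ∧ Integrable (g n) μ ∧
      ∫ ω, g n ω ∂μ ≤ C := fun n => cc_props hFmeas hFnn hFint hFC (hg1 n)
  -- Cauchy in measure
  have hcau : ∀ ε η : ℝ, 0 < ε → 0 < η → ∃ N : ℕ, ∀ n mm : ℕ, N ≤ n → N ≤ mm →
      μ {ω | ε ≤ |g n ω - g mm ω|} ≤ ENNReal.ofReal η := by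
    intro ε η hε hη
    set M : ℝ := 4*C/η + 1 with hMdef
    have hMpos : 0 < M := by positivity
    have hCM : C / M ≤ η / 4 := by
      rw [div_le_div_iff₀ hMpos (by norm_num : (0:ℝ) < 4)]
      have hηM : η * M = 4*C + η := by rw [hMdef]; field_simp
      nlinarith
    set δ : ℝ := (Real.exp (-(M/2)) * (1 - Real.exp (-(ε/2))))^2/2 with hδdef
    have hδpos : 0 < δ := by
      have h1 : Real.exp (-(ε/2)) < 1 := Real.exp_lt_one_iff.2 (by linarith)
      have h2 : 0 < Real.exp (-(M/2)) := Real.exp_pos _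
      have h3 : 0 < Real.exp (-(M/2)) * (1 - Real.exp (-(ε/2))) := by nlinarith
      exact div_pos (pow_pos h3 2) two_pos
    obtain ⟨N₁, hN₁⟩ := hBlt (δ*η/4) (by positivity)
    obtain ⟨N₂, hN₂⟩ := exists_nat_one_div_lt (show (0:ℝ) < δ*η/4 by positivity)
    refine ⟨max N₁ N₂, ?_⟩
    intro n mm hn hm
    set N : ℕ := max N₁ N₂ with hNdef
    obtain ⟨hmn, hnnn, hintn, hCn⟩ := hgprops n
    obtain ⟨hmm, hnnm, hintm, hCm⟩ := hgprops mm
    set A : Set Ω := {ω | ε ≤ |g n ω - g mm ω|} ∩ {ω | g n ω ≤ M} ∩ {ω | g mm ω ≤ M} with hAdef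
    have hkey := key_estimate (μ := μ) hmn hmm hnnn hnnm (M := M) hε.le
    -- the midpoint is in K_N
    have hmidcc : ConvexCombFrom F N ((2⁻¹ : ℝ) • g n + (2⁻¹ : ℝ) • g mm) :=
      cc_midpoint (cc_mono hn (hg1 n)) (cc_mono hm (hg1 mm))
    have hmidfun : ((2⁻¹ : ℝ) • g n + (2⁻¹ : ℝ) • g mm) = fun ω => (g n ω + g mm ω)/2 := by
      funext ω; simp [Pi.add_apply, Pi.smul_apply, smul_eq_mul]; ring
    have hmidβ : β N ≤ ∫ ω, Real.exp (-((g n ω + g mm ω)/2)) ∂μ := by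
      have := hβle N _ hmidcc
      rw [hΨdef, hmidfun] at this
      exact this
    have hΨn : Ψ (g n) < β n + 1/((n:ℝ)+1) := hg2 n
    have hΨm : Ψ (g mm) < β mm + 1/((mm:ℝ)+1) := hg2 mm
    have hfrac : ∀ k : ℕ, N ≤ k → 1/((k:ℝ)+1) ≤ 1/((N:ℝ)+1) := by
      intro k hk
      apply one_div_le_one_div_of_le (by positivity)
      exact_mod_cast Nat.succ_le_succ hk
    have hβNlow : B - δ*η/4 < β N := lt_of_lt_of_le hN₁ (hβmono (le_max_left _ _))
    have hfracN : 1/((N:ℝ)+1) ≤ 1/((N₂:ℝ)+1) := by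
      apply one_div_le_one_div_of_le (by positivity)
      exact_mod_cast Nat.succ_le_succ (le_max_right N₁ N₂)
    have hμA : δ * (μ A).toReal ≤ δ * η / 2 := by
      have e1 : Ψ (g n) ≤ B + 1/((N:ℝ)+1) :=
        le_trans hΨn.le (add_le_add (hβB n) (hfrac n hn))
      have e2 : Ψ (g mm) ≤ B + 1/((N:ℝ)+1) :=
        le_trans hΨm.le (add_le_add (hβB mm) (hfrac mm hm))
      have e3 : δ * (μ A).toReal ≤ (Ψ (g n) + Ψ (g mm))/2
          - ∫ ω, Real.exp (-((g n ω + g mm ω)/2)) ∂μ := by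
        rw [hΨdef]
        simp only [hδdef, hAdef] at hkey ⊢
        linarith [hkey]
      have e4 : 1/((N:ℝ)+1) < δ*η/4 := lt_of_le_of_lt hfracN hN₂
      linarith
    have hμA' : μ A ≤ ENNReal.ofReal (η/2) := by
      rw [ENNReal.le_ofReal_iff_toReal_le (measure_ne_top μ A) (by positivity)]
      have : (μ A).toReal ≤ η/2 := by
        have := (mul_le_mul_iff_right₀ hδpos).1 (by linarith [hμA] : δ * (μ A).toReal ≤ δ * (η/2))
        exact this
      exact this
    have hsub : {ω | ε ≤ |g n ω - g mm ω|} ⊆ A ∪ {ω | M ≤ g n ω} ∪ {ω | M ≤ g mm ω} := by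
      intro ω hω
      by_cases h1 : g n ω ≤ M
      · by_cases h2 : g mm ω ≤ M
        · exact Or.inl (Or.inl ⟨⟨hω, h1⟩, h2⟩)
        · exact Or.inr (not_le.1 h2).le
      · exact Or.inl (Or.inr (not_le.1 h1).le)
    have hm1 : μ {ω | M ≤ g n ω} ≤ ENNReal.ofReal (η/4) :=
      le_trans (markov_aux hmn hnnn hintn hCn hMpos) (ENNReal.ofReal_le_ofReal hCM)
    have hm2 : μ {ω | M ≤ g mm ω} ≤ ENNReal.ofReal (η/4) :=
      le_trans (markov_aux hmm hnnm hintm hCm hMpos) (ENNReal.ofReal_le_ofReal hCM)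
    calc μ {ω | ε ≤ |g n ω - g mm ω|} ≤ μ (A ∪ {ω | M ≤ g n ω} ∪ {ω | M ≤ g mm ω}) :=
          measure_mono hsub
      _ ≤ μ (A ∪ {ω | M ≤ g n ω}) + μ {ω | M ≤ g mm ω} := measure_union_le _ _
      _ ≤ μ A + μ {ω | M ≤ g n ω} + μ {ω | M ≤ g mm ω} :=
          add_le_add_left (measure_union_le _ _) _
      _ ≤ ENNReal.ofReal (η/2) + ENNReal.ofReal (η/4) + ENNReal.ofReal (η/4) :=
          add_le_add (add_le_add hμA' hm1) hm2
      _ = ENNReal.ofReal η := by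
          rw [← ENNReal.ofReal_add (by positivity) (by positivity),
            ← ENNReal.ofReal_add (by positivity) (by positivity)]
          congr 1
          ring
  -- extraction of a rapidly Cauchy subsequence
  have hsel2 : ∀ k : ℕ, ∃ N : ℕ, ∀ n mm : ℕ, N ≤ n → N ≤ mm →
      μ {ω | (1/2:ℝ)^k ≤ |g n ω - g mm ω|} ≤ ENNReal.ofReal ((1/2:ℝ)^k) :=
    fun k => hcau _ _ (by positivity) (by positivity)
  choose Nk hNk using hsel2
  set φ : ℕ → ℕ := fun k => Nat.rec (Nk 0) (fun k ih => max (Nk (k+1)) (ih + 1)) k with hφdef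
  have hφsucc : ∀ k, φ (k+1) = max (Nk (k+1)) (φ k + 1) := fun k => rfl
  have hφmono : StrictMono φ := strictMono_nat_of_lt_succ fun k => by
    rw [hφsucc]; exact lt_of_lt_of_le (Nat.lt_succ_self _) (le_max_right _ _)
  have hφN : ∀ k, Nk k ≤ φ k := by
    intro k
    cases k with
    | zero => exact le_refl _
    | succ k => rw [hφsucc]; exact le_max_left _ _
  set s : ℕ → Set Ω := fun k => {ω | (1/2:ℝ)^k ≤ |g (φ (k+1)) ω - g (φ k) ω|} with hsdef
  have hbound : ∀ k, μ (s k) ≤ ENNReal.ofReal ((1/2:ℝ)^k) := fun k =>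
    hNk k (φ (k+1)) (φ k) (le_trans (hφN k) (hφmono (Nat.lt_succ_self k)).le) (hφN k)
  have htsum : (∑' k, μ (s k)) ≠ ⊤ := by
    have h1 : (∑' k, μ (s k)) ≤ ∑' k : ℕ, ENNReal.ofReal ((1/2:ℝ)^k) :=
      ENNReal.tsum_le_tsum hbound
    have h2 : ∀ k : ℕ, ENNReal.ofReal ((1/2:ℝ)^k) = (ENNReal.ofReal (1/2))^k :=
      fun k => ENNReal.ofReal_pow (by norm_num) k
    rw [tsum_congr h2, ENNReal.tsum_geometric] at h1
    have h3 : ENNReal.ofReal (1/2) < 1 := ENNReal.ofReal_lt_one.2 (by norm_num)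
    have h4 : (1 - ENNReal.ofReal (1/2))⁻¹ ≠ ⊤ := ENNReal.inv_ne_top.2 (by
      intro h; rw [tsub_eq_zero_iff_le] at h; exact absurd h (not_le.2 h3))
    exact ne_top_of_le_ne_top h4 h1
  have hBC := MeasureTheory.ae_eventually_notMem htsum
  -- a.e. convergence of the subsequence
  have hconv0 : ∀ᵐ ω ∂μ, ∃ L : ℝ, Tendsto (fun k => g (φ k) ω) atTop (𝓝 L) := by
    filter_upwards [hBC] with ω hω
    have hd : ∀ᶠ k in atTop, dist (g (φ k) ω) (g (φ (k+1)) ω) ≤ (1/2:ℝ)^k := by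
      filter_upwards [hω] with k hk
      have hk' : ¬ ((1/2:ℝ)^k ≤ |g (φ (k+1)) ω - g (φ k) ω|) := hk
      rw [Real.dist_eq, abs_sub_comm]
      linarith [not_le.1 hk']
    have hsum : Summable fun k => dist (g (φ k) ω) (g (φ (k+1)) ω) := by
      refine Summable.of_norm_bounded_eventually_nat summable_geometric_two ?_
      filter_upwards [hd] with k hk
      rw [Real.norm_eq_abs, abs_of_nonneg dist_nonneg]
      exact hk
    exact cauchySeq_tendsto_of_complete (cauchySeq_of_summable_dist hsum)
  -- the limit
  set Gl : Ω → ENNReal := fun ω => liminf (fun k => ENNReal.ofReal (g (φ k) ω)) atTop with hGldef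
  have hGlmeas : Measurable Gl :=
    Measurable.liminf fun k => ENNReal.measurable_ofReal.comp (hgprops (φ k)).1
  set gl : Ω → ℝ := fun ω => (Gl ω).toReal with hgldef
  have hglmeas : Measurable gl := hGlmeas.ennreal_toReal
  have hglnn : ∀ ω, 0 ≤ gl ω := fun ω => ENNReal.toReal_nonneg
  have hconv : ∀ᵐ ω ∂μ, Tendsto (fun k => g (φ k) ω) atTop (𝓝 (gl ω)) := by
    filter_upwards [hconv0] with ω hω
    obtain ⟨L, hL⟩ := hω
    have hL0 : 0 ≤ L :=
      ge_of_tendsto hL (Filter.Eventually.of_forall fun k => (hgprops (φ k)).2.1 ω)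
    have h2 : Tendsto (fun k => ENNReal.ofReal (g (φ k) ω)) atTop (𝓝 (ENNReal.ofReal L)) :=
      (ENNReal.continuous_ofReal.tendsto L).comp hL
    have h3 : Gl ω = ENNReal.ofReal L := h2.liminf_eq
    have h4 : gl ω = L := by
      rw [show gl ω = (Gl ω).toReal from rfl, h3, ENNReal.toReal_ofReal hL0]
    rw [h4]
    exact hL
  -- integrability of the limit
  have hlint : ∫⁻ ω, ENNReal.ofReal (gl ω) ∂μ ≤ ENNReal.ofReal C := by
    have h1 : ∫⁻ ω, ENNReal.ofReal (gl ω) ∂μ ≤ ∫⁻ ω, Gl ω ∂μ :=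
      lintegral_mono fun ω => ENNReal.ofReal_toReal_le
    have h2 : ∫⁻ ω, Gl ω ∂μ ≤ liminf (fun k => ∫⁻ ω, ENNReal.ofReal (g (φ k) ω) ∂μ) atTop :=
      lintegral_liminf_le fun k => ENNReal.measurable_ofReal.comp (hgprops (φ k)).1
    have h3 : ∀ k, ∫⁻ ω, ENNReal.ofReal (g (φ k) ω) ∂μ ≤ ENNReal.ofReal C := by
      intro k
      rw [← ofReal_integral_eq_lintegral_ofReal (hgprops (φ k)).2.2.1
        (Filter.Eventually.of_forall (hgprops (φ k)).2.1)]
      exact ENNReal.ofReal_le_ofReal (hgprops (φ k)).2.2.2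
    have h4 : liminf (fun k => ∫⁻ ω, ENNReal.ofReal (g (φ k) ω) ∂μ) atTop
        ≤ ENNReal.ofReal C := by
      calc liminf (fun k => ∫⁻ ω, ENNReal.ofReal (g (φ k) ω) ∂μ) atTop
          ≤ liminf (fun _ : ℕ => ENNReal.ofReal C) atTop :=
            Filter.liminf_le_liminf (Filter.Eventually.of_forall h3)
        _ = ENNReal.ofReal C := liminf_const _
    exact le_trans h1 (le_trans h2 h4)
  have hglint : Integrable gl μ := by
    refine ⟨hglmeas.aestronglyMeasurable, ?_⟩
    rw [hasFiniteIntegral_iff_ofReal (Filter.Eventually.of_forall hglnn)]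
    exact lt_of_le_of_lt hlint ENNReal.ofReal_lt_top
  -- final convex combinations of the original sequence
  have hcck : ∀ k, ConvexCombFrom F k (g (φ k)) :=
    fun k => cc_mono hφmono.le_apply (hg1 (φ k))
  choose NN ww hw0 hwz hws hgeq using hcck
  refine ⟨fun k => ∑ j ∈ Finset.range (NN k + 1), ww k j • f j, gl,
    fun k => ⟨NN k, ww k, hw0 k, hwz k, hws k, rfl⟩, hglint, hglnn, ?_⟩
  have hfteq : ∀ᵐ ω ∂μ, ∀ k,
      (∑ j ∈ Finset.range (NN k + 1), ww k j • f j) ω = g (φ k) ω := by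
    rw [ae_all_iff]
    intro k
    have hae : ∀ᵐ ω ∂μ, ∀ j, f j ω = F j ω := by
      rw [ae_all_iff]
      exact fun j => hFeq j
    filter_upwards [hae] with ω hω
    rw [hgeq k]
    simp only [Finset.sum_apply, Pi.smul_apply, smul_eq_mul]
    exact Finset.sum_congr rfl fun j _ => by rw [hω j]
  filter_upwards [hconv, hfteq] with ω h1 h2
  have heq : (fun k => (∑ j ∈ Finset.range (NN k + 1), ww k j • f j) ω)
      = fun k => g (φ k) ω := funext fun k => h2 k
  rw [heq]
  exact h1

end OSS
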